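/- Let R be a ring and e ∈ R a full idempotent, i.e., e² = e and ReR = R. Then the functors X ↦ Re ⊗_{eRe} X and Y ↦ eR ⊗_R Y give an equivalence between the category of left eRe-modules and the category of left R-modules; in particular, R and eRe are Morita equivalent. -/

import Mathlib

/-- The corner `eRe` of a ring `R` at an idempotent `e`. -/
def Corner {R : Type} [Ring R] (e : R) : Type := {x : R // e * x * e = x}

namespace Corner

variable {R : Type} [Ring R] {e : R} [he : Fact (e * e = e)]

theorem absorb_left (x : Corner e) : e * x.1 = x.1 := by
  conv_lhs => rw [← x.2]
  rw [← mul_assoc, ← mul_assoc, he.out]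
  exact x.2

theorem absorb_right (x : Corner e) : x.1 * e = x.1 := by
  conv_lhs => rw [← x.2]
  rw [mul_assoc, he.out]
  exact x.2

instance : Zero (Corner e) := ⟨⟨0, by simp⟩⟩
instance : Add (Corner e) := ⟨fun x y => ⟨x.1 + y.1, by rw [mul_add, add_mul, x.2, y.2]⟩⟩
instance : Neg (Corner e) := ⟨fun x => ⟨-x.1, by simp [x.2]⟩⟩
instance : One (Corner e) := ⟨⟨e, by rw [he.out, he.out]⟩⟩
instance : Mul (Corner e) :=
  ⟨fun x y => ⟨x.1 * y.1, by
    rw [← mul_assoc, mul_assoc e x.1 y.1, ← mul_assoc e x.1, absorb_left x, mul_assoc,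
      absorb_right y]⟩⟩

instance : Ring (Corner e) where
  add_assoc a b c := Subtype.ext (add_assoc a.1 b.1 c.1)
  zero_add a := Subtype.ext (zero_add a.1)
  add_zero a := Subtype.ext (add_zero a.1)
  add_comm a b := Subtype.ext (add_comm a.1 b.1)
  neg_add_cancel a := Subtype.ext (neg_add_cancel a.1)
  left_distrib a b c := Subtype.ext (left_distrib a.1 b.1 c.1)
  right_distrib a b c := Subtype.ext (right_distrib a.1 b.1 c.1)
  zero_mul a := Subtype.ext (zero_mul a.1)
  mul_zero a := Subtype.ext (mul_zero a.1)
  mul_assoc a b c := Subtype.ext (mul_assoc a.1 b.1 c.1)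
  one_mul a := Subtype.ext (absorb_left a)
  mul_one a := Subtype.ext (absorb_right a)
  nsmul := nsmulRec
  zsmul := zsmulRec

end Corner

/-- The additive subgroup `eY = {y ∈ Y | e • y = y}` of an `R`-module `Y`. -/
def eFixed {R : Type} [Ring R] (e : R) (he : e * e = e) (Y : Type) [AddCommGroup Y]
    [Module R Y] : AddSubgroup Y where
  carrier := {y | e • y = y}
  add_mem' := by
    intro a b ha hb
    simp only [Set.mem_setOf_eq] at *
    rw [smul_add, ha, hb]
  zero_mem' := by simp
  neg_mem' := by
    intro a ha
    simp only [Set.mem_setOf_eq] at *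
    rw [smul_neg, ha]

open CategoryTheory

namespace MoritaAux

variable {R : Type} [Ring R] (e : R) [he : Fact (e * e = e)]

theorem mem_eFixed_smul {Y : Type} [AddCommGroup Y] [Module R Y] (s : Corner e)
    (y : eFixed e he.out Y) : (e * s.1) • y.1 = s.1 • y.1 := by
  rw [Corner.absorb_left]

instance eFixedModule {Y : Type} [AddCommGroup Y] [Module R Y] :
    Module (Corner e) (eFixed e he.out Y) where
  smul s y := ⟨s.1 • y.1, by
    show e • (s.1 • y.1) = _
    rw [smul_smul, Corner.absorb_left]⟩
  one_smul y := Subtype.ext y.2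
  mul_smul s t y := Subtype.ext (mul_smul s.1 t.1 y.1)
  smul_add s y z := Subtype.ext (smul_add s.1 y.1 z.1)
  smul_zero s := Subtype.ext (smul_zero s.1)
  add_smul s t y := Subtype.ext (add_smul s.1 t.1 y.1)
  zero_smul y := Subtype.ext (zero_smul R y.1)

@[simp] theorem eFixed_smul_coe {Y : Type} [AddCommGroup Y] [Module R Y] (s : Corner e)
    (y : eFixed e he.out Y) : ((s • y : eFixed e he.out Y) : Y) = s.1 • (y : Y) := rfl

/-- Restriction of an `R`-linear map to the `e`-fixed parts. -/
def restrict {Y Z : Type} [AddCommGroup Y] [Module R Y] [AddCommGroup Z] [Module R Z]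
    (f : Y →ₗ[R] Z) : eFixed e he.out Y →ₗ[Corner e] eFixed e he.out Z where
  toFun y := ⟨f y.1, by show e • f y.1 = f y.1; rw [← map_smul, y.2]⟩
  map_add' y z := Subtype.ext (map_add f y.1 z.1)
  map_smul' s y := Subtype.ext (map_smul f s.1 y.1)

/-- The functor `Y ↦ eY`. -/
def G : ModuleCat.{0} R ⥤ ModuleCat.{0} (Corner e) where
  obj Y := ModuleCat.of _ (eFixed e he.out Y)
  map f := ModuleCat.ofHom (restrict e f.hom)
  map_id _ := rfl
  map_comp _ _ := by rfl

end MoritaAux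

namespace MoritaAux

variable {R : Type} [Ring R] (e : R) [he : Fact (e * e = e)]

/-- `eR` as an additive subgroup of `R`. -/
def ER : AddSubgroup R where
  carrier := {x | e * x = x}
  add_mem' := by intro a b ha hb; simp only [Set.mem_setOf_eq] at *; rw [mul_add, ha, hb]
  zero_mem' := by simp
  neg_mem' := by intro a ha; simp only [Set.mem_setOf_eq] at *; rw [mul_neg, ha]

instance ERmodule : Module (Corner e) (ER e) where
  smul s x := ⟨s.1 * x.1, by show e * _ = _; rw [← mul_assoc, Corner.absorb_left]⟩
  one_smul x := Subtype.ext x.2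
  mul_smul s t x := Subtype.ext (mul_assoc s.1 t.1 x.1)
  smul_add s x y := Subtype.ext (mul_add s.1 x.1 y.1)
  smul_zero s := Subtype.ext (mul_zero s.1)
  add_smul s t x := Subtype.ext (add_mul s.1 t.1 x.1)
  zero_smul x := Subtype.ext (zero_mul x.1)

@[simp] theorem ER_smul_coe (s : Corner e) (x : ER e) :
    ((s • x : ER e) : R) = s.1 * (x : R) := rfl

/-- `Hom_{eRe}(eR, X)` as a type synonym, to carry a left `R`-module structure. -/
def HomY (X : Type) [AddCommGroup X] [Module (Corner e) X] : Type :=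
  ER e →ₗ[Corner e] X

variable (X : Type) [AddCommGroup X] [Module (Corner e) X]

instance : AddCommGroup (HomY e X) := inferInstanceAs (AddCommGroup (ER e →ₗ[Corner e] X))

/-- Unfold a `HomY` to its underlying linear map. -/
def HomY.lm {e : R} [Fact (e * e = e)] {X : Type} [AddCommGroup X] [Module (Corner e) X]
    (f : HomY e X) : ER e →ₗ[Corner e] X := f

theorem HomY.ext {e : R} [Fact (e * e = e)] {X : Type} [AddCommGroup X]
    [Module (Corner e) X] {f g : HomY e X} (h : ∀ x, f.lm x = g.lm x) : f = g :=
  LinearMap.ext h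

@[simp] theorem HomY.lm_add (f g : HomY e X) (x : ER e) :
    (f + g).lm x = f.lm x + g.lm x := rfl

/-- right translation `x ↦ x * r` on `eR`, as an `eRe`-linear map. -/
def rmul (r : R) : ER e →ₗ[Corner e] ER e where
  toFun x := ⟨x.1 * r, by show e * _ = _; rw [← mul_assoc, x.2]⟩
  map_add' x y := Subtype.ext (add_mul x.1 y.1 r)
  map_smul' s x := Subtype.ext (mul_assoc s.1 x.1 r)

instance HomYmodule : Module R (HomY e X) where
  smul r f := ((f.lm).comp (rmul e r) : ER e →ₗ[Corner e] X)
  one_smul f := HomY.ext fun x => congrArg f.lm (Subtype.ext (mul_one x.1))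
  mul_smul r s f := HomY.ext fun x => congrArg f.lm (Subtype.ext (mul_assoc x.1 r s).symm)
  smul_add r f g := rfl
  smul_zero r := rfl
  add_smul r s f := HomY.ext fun x => by
    show f.lm ((rmul e (r + s)) x) = f.lm (rmul e r x) + f.lm (rmul e s x)
    rw [← map_add]
    exact congrArg f.lm (Subtype.ext (mul_add x.1 r s))
  zero_smul f := HomY.ext fun x => by
    show f.lm ((rmul e 0) x) = 0
    have : (rmul e 0) x = 0 := Subtype.ext (mul_zero x.1)
    rw [this, map_zero]

@[simp] theorem HomY_smul_lm_apply (r : R) (f : HomY e X) (x : ER e) :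
    (r • f : HomY e X).lm x = f.lm ⟨x.1 * r, by show e * _ = _; rw [← mul_assoc, x.2]⟩ := by rfl

end MoritaAux

namespace MoritaAux

variable {R : Type} [Ring R] (e : R) [he : Fact (e * e = e)]
variable (X : Type) [AddCommGroup X] [Module (Corner e) X]

theorem mem_ER_e : e * e = e := he.out

theorem corner_of_ER_mul_e (x : ER e) : e * (x.1 * e) * e = x.1 * e := by
  rw [← mul_assoc, x.2, mul_assoc, he.out]

/-- Pack an element of `R` into the corner. -/
def toCorner (x : R) (h : e * x * e = x) : Corner e := ⟨x, h⟩

@[simp] theorem toCorner_coe (x : R) (h : e * x * e = x) : (toCorner e x h).1 = x := rfl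

theorem cext {e : R} {x y : Corner e} (h : x.1 = y.1) : x = y := Subtype.ext h

/-- Pack a linear map into `HomY`. -/
def HomY.mk (f : ER e →ₗ[Corner e] X) : HomY e X := f

/-- Evaluation at `e`. -/
def ev : eFixed e he.out (HomY e X) →ₗ[Corner e] X where
  toFun f := (HomY.lm f.1) ⟨e, he.out⟩
  map_add' f g := rfl
  map_smul' s f := by
    have h1 : ((s • f : eFixed e he.out (HomY e X)) : HomY e X) = s.1 • (f : HomY e X) := rfl
    show HomY.lm ((s • f : eFixed e he.out (HomY e X)) : HomY e X) ⟨e, he.out⟩ = _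
    rw [h1, HomY_smul_lm_apply]
    have h2 : (⟨e * s.1, by show e * (e * s.1) = e * s.1; rw [← mul_assoc, he.out]⟩ : ER e)
        = s • (⟨e, he.out⟩ : ER e) := by
      apply Subtype.ext
      show e * s.1 = s.1 * e
      rw [Corner.absorb_left, Corner.absorb_right]
    rw [h2, map_smul]
    rfl

/-- The map `x ↦ (xe) • u` from `eR` to `X`. -/
def mkHom (u : X) : ER e →ₗ[Corner e] X where
  toFun x := toCorner e (x.1 * e) (corner_of_ER_mul_e e x) • u
  map_add' x y := by
    have h : toCorner e ((x + y).1 * e) (corner_of_ER_mul_e e (x + y))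
        = toCorner e (x.1 * e) (corner_of_ER_mul_e e x)
          + toCorner e (y.1 * e) (corner_of_ER_mul_e e y) := cext (add_mul x.1 y.1 e)
    show toCorner e ((x + y).1 * e) (corner_of_ER_mul_e e (x + y)) • u = _
    rw [h, add_smul]
  map_smul' s x := by
    have h : toCorner e ((s • x).1 * e) (corner_of_ER_mul_e e (s • x))
        = s * toCorner e (x.1 * e) (corner_of_ER_mul_e e x) := cext (mul_assoc s.1 x.1 e)
    show toCorner e ((s • x).1 * e) (corner_of_ER_mul_e e (s • x)) • u = _
    rw [h, mul_smul]
    rfl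

theorem ev_bijective : Function.Bijective (ev e X) := by
  constructor
  · rw [injective_iff_map_eq_zero]
    intro f hf
    have hfix : ∀ x : ER e, HomY.lm (f : HomY e X) ⟨x.1 * e, by
        show e * _ = _; rw [← mul_assoc, x.2]⟩ = HomY.lm (f : HomY e X) x := by
      intro x
      have := f.2
      change e • (f : HomY e X) = (f : HomY e X) at this
      conv_rhs => rw [← this]
      rfl
    apply Subtype.ext
    apply HomY.ext
    intro x
    have key : (⟨x.1 * e, by show e * _ = _; rw [← mul_assoc, x.2]⟩ : ER e)
        = toCorner e (x.1 * e) (corner_of_ER_mul_e e x) • (⟨e, he.out⟩ : ER e) := by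
      apply Subtype.ext
      show x.1 * e = (x.1 * e) * e
      rw [mul_assoc, he.out]
    rw [← hfix x, key, map_smul]
    have : HomY.lm (f : HomY e X) ⟨e, he.out⟩ = 0 := hf
    rw [this, smul_zero]
    rfl
  · intro u
    refine ⟨⟨HomY.mk e X (mkHom e X u), ?_⟩, ?_⟩
    · show e • HomY.mk e X (mkHom e X u) = HomY.mk e X (mkHom e X u)
      apply HomY.ext
      intro x
      have hx : e * (x.1 * e) = x.1 * e := by rw [← mul_assoc, x.2]
      show (mkHom e X u) ⟨x.1 * e, hx⟩ = (mkHom e X u) x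
      show toCorner e ((x.1 * e) * e) (corner_of_ER_mul_e e ⟨x.1 * e, hx⟩) • u
          = toCorner e (x.1 * e) (corner_of_ER_mul_e e x) • u
      have h : toCorner e ((x.1 * e) * e) (corner_of_ER_mul_e e ⟨x.1 * e, hx⟩)
          = toCorner e (x.1 * e) (corner_of_ER_mul_e e x) := cext (by
        show (x.1 * e) * e = x.1 * e
        rw [mul_assoc, he.out])
      rw [h]
    · show toCorner e (e * e) (corner_of_ER_mul_e e ⟨e, he.out⟩) • u = u
      have h1 : toCorner e (e * e) (corner_of_ER_mul_e e ⟨e, he.out⟩) = (1 : Corner e) :=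
        Subtype.ext he.out
      rw [h1, one_smul]

/-- `e • Hom_{eRe}(eR, X) ≃ X`. -/
noncomputable def essSurjEquiv : eFixed e he.out (HomY e X) ≃ₗ[Corner e] X :=
  LinearEquiv.ofBijective (ev e X) (ev_bijective e X)

end MoritaAux

namespace MoritaAux

variable {R : Type} [Ring R] (e : R) [he : Fact (e * e = e)]
variable {Y Z : Type} [AddCommGroup Y] [Module R Y] [AddCommGroup Z] [Module R Z]

/-- `e • (a • y)`, as an element of `eY`. -/
def eEl (a : R) (y : Y) : eFixed e he.out Y :=
  ⟨(e * a) • y, by show e • ((e * a) • y) = (e * a) • y; rw [smul_smul, ← mul_assoc, he.out]⟩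

@[simp] theorem eEl_coe (a : R) (y : Y) : (eEl e a y : Y) = (e * a) • y := rfl

theorem corner_eae (a : R) : e * (e * a * e) * e = e * a * e := by
  rw [← mul_assoc, ← mul_assoc, he.out, mul_assoc, he.out]

theorem eue_mul_ev (u v : R) : (e * u * e) * (e * v) = e * u * (e * v) := by
  rw [mul_assoc (e * u) e (e * v), ← mul_assoc e e v, he.out]

theorem expand_key {n : ℕ} {c d : Fin n → R} (h1 : (1 : R) = ∑ i, c i * e * d i)
    (g : eFixed e he.out Y →ₗ[Corner e] eFixed e he.out Z) (a : R) (y : Y) :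
    (g (eEl e a y) : Z) = ∑ j, (e * (a * c j) * e) • (g (eEl e (d j) y) : Z) := by
  have hsplit : eEl e a y
      = ∑ j, toCorner e (e * (a * c j) * e) (corner_eae e _) • eEl e (d j) y := by
    apply Subtype.ext
    rw [AddSubmonoidClass.coe_finset_sum]
    show (e * a) • y = ∑ j, ((toCorner e (e * (a * c j) * e) (corner_eae e _)
      • eEl e (d j) y : eFixed e he.out Y) : Y)
    have : ∀ j, ((toCorner e (e * (a * c j) * e) (corner_eae e _)
        • eEl e (d j) y : eFixed e he.out Y) : Y) = ((e * a) * (c j * e * d j)) • y := by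
      intro j
      rw [eFixed_smul_coe, eEl_coe, toCorner_coe, smul_smul, eue_mul_ev]
      congr 1
      noncomm_ring
    rw [Finset.sum_congr rfl fun j _ => this j, ← Finset.sum_smul, ← Finset.mul_sum, ← h1,
      mul_one]
  rw [hsplit, map_sum]
  rw [AddSubmonoidClass.coe_finset_sum]
  exact Finset.sum_congr rfl fun j _ => by rw [map_smul, eFixed_smul_coe, toCorner_coe]

/-- The extension of `g : eY → eZ` to an `R`-linear map `Y → Z`. -/
def extend {n : ℕ} (c d : Fin n → R) (h1 : (1 : R) = ∑ i, c i * e * d i)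
    (g : eFixed e he.out Y →ₗ[Corner e] eFixed e he.out Z) : Y →ₗ[R] Z where
  toFun y := ∑ i, c i • (g (eEl e (d i) y) : Z)
  map_add' y z := by
    have : ∀ a : R, eEl e a (y + z) = eEl e a y + eEl e a z := fun a =>
      Subtype.ext (smul_add _ y z)
    simp only [this, map_add, AddSubgroup.coe_add, smul_add, Finset.sum_add_distrib]
  map_smul' r y := by
    show ∑ i, c i • (g (eEl e (d i) (r • y)) : Z) = r • ∑ i, c i • (g (eEl e (d i) y) : Z)
    have h2 : ∀ i, eEl e (d i) (r • y) = eEl e (d i * r) y := fun i =>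
      Subtype.ext (by rw [eEl_coe, eEl_coe, smul_smul, mul_assoc])
    calc ∑ i, c i • (g (eEl e (d i) (r • y)) : Z)
        = ∑ i, c i • ∑ j, (e * (d i * r * c j) * e) • (g (eEl e (d j) y) : Z) := by
          refine Finset.sum_congr rfl fun i _ => ?_
          rw [h2 i, expand_key e h1 g (d i * r) y]
      _ = ∑ i, ∑ j, (c i * (e * (d i * r * c j) * e)) • (g (eEl e (d j) y) : Z) := by
          refine Finset.sum_congr rfl fun i _ => ?_
          rw [Finset.smul_sum]
          exact Finset.sum_congr rfl fun j _ => by rw [smul_smul]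
      _ = ∑ j, ∑ i, (c i * (e * (d i * r * c j) * e)) • (g (eEl e (d j) y) : Z) :=
          Finset.sum_comm
      _ = ∑ j, (r * c j * e) • (g (eEl e (d j) y) : Z) := by
          refine Finset.sum_congr rfl fun j _ => ?_
          rw [← Finset.sum_smul]
          congr 1
          calc ∑ i, c i * (e * (d i * r * c j) * e)
              = ∑ i, (c i * e * d i) * (r * c j * e) := by
                refine Finset.sum_congr rfl fun i _ => ?_
                noncomm_ring
            _ = (∑ i, c i * e * d i) * (r * c j * e) := by rw [Finset.sum_mul]
            _ = r * c j * e := by rw [← h1, one_mul]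
      _ = r • ∑ i, c i • (g (eEl e (d i) y) : Z) := by
          rw [Finset.smul_sum]
          refine Finset.sum_congr rfl fun j _ => ?_
          have h3 : e • (g (eEl e (d j) y) : Z) = (g (eEl e (d j) y) : Z) :=
            (g (eEl e (d j) y)).2
          rw [mul_assoc, mul_smul, mul_smul, h3]

end MoritaAux

namespace MoritaAux

variable {R : Type} [Ring R] (e : R) [he : Fact (e * e = e)]
variable {Y Z : Type} [AddCommGroup Y] [Module R Y] [AddCommGroup Z] [Module R Z]

theorem restrict_extend {n : ℕ} {c d : Fin n → R} (h1 : (1 : R) = ∑ i, c i * e * d i)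
    (g : eFixed e he.out Y →ₗ[Corner e] eFixed e he.out Z) :
    restrict e (extend e c d h1 g) = g := by
  apply LinearMap.ext
  intro z
  apply Subtype.ext
  show ∑ i, c i • (g (eEl e (d i) z.1) : Z) = (g z : Z)
  have hz : ∀ i, eEl e (d i) z.1 = toCorner e (e * d i * e) (corner_eae e (d i)) • z := by
    intro i
    apply Subtype.ext
    show (e * d i) • z.1 = (e * d i * e) • z.1
    conv_lhs => rw [← z.2]
    rw [smul_smul]
  have hgz : e • (g z : Z) = (g z : Z) := (g z).2
  calc ∑ i, c i • (g (eEl e (d i) z.1) : Z)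
      = ∑ i, ((c i * e * d i) * e) • (g z : Z) := by
        refine Finset.sum_congr rfl fun i _ => ?_
        rw [hz i, map_smul, eFixed_smul_coe, toCorner_coe, smul_smul]
        congr 1
        noncomm_ring
    _ = ((∑ i, c i * e * d i) * e) • (g z : Z) := by rw [← Finset.sum_smul, Finset.sum_mul]
    _ = (g z : Z) := by rw [← h1, one_mul, hgz]

theorem extend_restrict {n : ℕ} {c d : Fin n → R} (h1 : (1 : R) = ∑ i, c i * e * d i)
    (f : Y →ₗ[R] Z) : extend e c d h1 (restrict e f) = f := by
  apply LinearMap.ext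
  intro y
  show ∑ i, c i • (f ((e * d i) • y)) = f y
  calc ∑ i, c i • f ((e * d i) • y)
      = ∑ i, f ((c i * e * d i) • y) := by
        refine Finset.sum_congr rfl fun i _ => ?_
        rw [← map_smul, smul_smul, ← mul_assoc]
    _ = f ((∑ i, c i * e * d i) • y) := by rw [← map_sum, ← Finset.sum_smul]
    _ = f y := by rw [← h1, one_smul]

end MoritaAux


open MoritaAux in
/-- Morita equivalence via a full idempotent: if `e ∈ R` is a full idempotent
(`e² = e` and `ReR = R`), then the categories of left `eRe`-modules and left `R`-modules
are equivalent via the functors `X ↦ Re ⊗_{eRe} X` and `Y ↦ eR ⊗_R Y`; the latter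
functor is (naturally isomorphic to) `Y ↦ eY`, as recorded by the additive isomorphism
`φ` below, which intertwines the `eRe`-action with multiplication by `eRe ⊆ R`.
In particular `R` and `eRe` are Morita equivalent. -/
theorem stmt6 {R : Type} [Ring R] (e : R) (he : e * e = e)
    (hfull : ∀ r : R, ∃ (n : ℕ) (c d : Fin n → R), r = ∑ i, c i * e * d i) :
    haveI : Fact (e * e = e) := ⟨he⟩
    ∃ E : ModuleCat.{0} (Corner e) ≌ ModuleCat.{0} R,
      ∀ Y : ModuleCat.{0} R,
        ∃ φ : (E.inverse.obj Y) ≃+ eFixed e he Y,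
          ∀ (s : Corner e) (x : E.inverse.obj Y),
            (φ (s • x) : Y) = s.1 • (φ x : Y) := by
  haveI : Fact (e * e = e) := ⟨he⟩
  obtain ⟨n, c, d, h1⟩ := hfull 1
  haveI : (G e).Full := ⟨fun {Y Z} g => ⟨ModuleCat.ofHom (extend e c d h1 g.hom),
    ModuleCat.hom_ext (restrict_extend e h1 g.hom)⟩⟩
  haveI : (G e).Faithful := ⟨fun {Y Z} {f f'} h => by
    apply ModuleCat.hom_ext
    have h2 := extend_restrict e h1 f.hom
    have h3 := extend_restrict e h1 f'.hom
    rw [← h2, ← h3]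
    show extend e c d h1 (restrict e f.hom) = extend e c d h1 (restrict e f'.hom)
    rw [show restrict e f.hom = restrict e f'.hom from congrArg ModuleCat.Hom.hom h]⟩
  haveI : (G e).EssSurj := ⟨fun X =>
    ⟨ModuleCat.of R (HomY e X), ⟨(essSurjEquiv e X).toModuleIso⟩⟩⟩
  haveI : (G e).IsEquivalence :=
    { full := inferInstance, faithful := inferInstance, essSurj := inferInstance }
  exact ⟨(G e).asEquivalence.symm, fun Y => ⟨AddEquiv.refl _, fun s x => rfl⟩⟩
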